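/- Let (Γ, I) be an independence alphabet, η : M(Γ, I) → Q an embedding into the queue monoid, and a ∈ Γ a letter with both π(η(a)) ≠ ε and π̄(η(a)) ≠ ε. Then a has degree at most 1 in the graph (Γ, I), i.e., there is at most one b ∈ Γ with (a, b) ∈ I. -/

import Mathlib

def qstep (A : Type) [DecidableEq A] : Option (List A) → A ⊕ A → Option (List A)
  | none, _ => none
  | some q, Sum.inl a => some (q ++ [a])
  | some q, Sum.inr a =>
      match q with
      | [] => none
      | b :: q' => if b = a then some q' else none

def qact (A : Type) [DecidableEq A] (q : Option (List A)) (u : List (A ⊕ A)) :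
    Option (List A) :=
  u.foldl (qstep A) q

def QEquiv (A : Type) [DecidableEq A] (u v : List (A ⊕ A)) : Prop :=
  ∀ q : Option (List A), qact A q u = qact A q v

/-- The congruence on the free monoid of queue actions identifying sequences with the
same effect on every queue state. -/
def queueCon (A : Type) [DecidableEq A] : Con (FreeMonoid (A ⊕ A)) where
  r u v := QEquiv A u.toList v.toList
  iseqv := ⟨fun _ _ => rfl, fun h q => (h q).symm, fun h1 h2 q => (h1 q).trans (h2 q)⟩
  mul' := by
    intro u v u' v' hu hv q
    have h1 := hu q
    have h2 := hv (qact A q v.toList)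
    show qact A q (u * u').toList = qact A q (v * v').toList
    rw [FreeMonoid.toList_mul, FreeMonoid.toList_mul]
    unfold qact at h1 h2 ⊢
    rw [List.foldl_append, List.foldl_append, h1, h2]

/-- The queue monoid over the alphabet `A`. -/
abbrev QueueMonoid (A : Type) [DecidableEq A] := (queueCon A).Quotient

/-- The congruence on the free monoid generated by `ab = ba` for independent `(a,b)`. -/
def traceCon {Γ : Type} (I : Γ → Γ → Prop) : Con (FreeMonoid Γ) :=
  conGen fun u v => ∃ a b : Γ, I a b ∧
    u = FreeMonoid.of a * FreeMonoid.of b ∧ v = FreeMonoid.of b * FreeMonoid.of a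

/-- The trace monoid of the independence alphabet `(Γ, I)`. -/
abbrev TraceMonoid {Γ : Type} (I : Γ → Γ → Prop) := (traceCon I).Quotient

/-- Positive projection: erase all read actions. -/
def ppr {A : Type} (u : List (A ⊕ A)) : List A :=
  u.filterMap (Sum.elim some fun _ => none)

/-- Negative projection: erase all write actions (mapping ā to a). -/
def npr {A : Type} (u : List (A ⊕ A)) : List A :=
  u.filterMap (Sum.elim (fun _ => none) some)

/-- `a ∈ Γ₊`: some (equivalently, every) representative of `η(a)` has nonempty positive
projection and empty negative projection. -/
def GammaPlus {Γ A : Type} [DecidableEq A] (I : Γ → Γ → Prop)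
    (η : TraceMonoid I →* QueueMonoid A) (a : Γ) : Prop :=
  ∃ w : List (A ⊕ A),
    (queueCon A).mk' (FreeMonoid.ofList w) = η ((traceCon I).mk' (FreeMonoid.of a)) ∧
    ppr w ≠ [] ∧ npr w = []

/-- `a ∈ Γ₋`: some representative of `η(a)` has empty positive projection and nonempty
negative projection. -/
def GammaMinus {Γ A : Type} [DecidableEq A] (I : Γ → Γ → Prop)
    (η : TraceMonoid I →* QueueMonoid A) (a : Γ) : Prop :=
  ∃ w : List (A ⊕ A),
    (queueCon A).mk' (FreeMonoid.ofList w) = η ((traceCon I).mk' (FreeMonoid.of a)) ∧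
    ppr w = [] ∧ npr w ≠ []

/-- `a ∈ Γ±`: some representative of `η(a)` has both projections nonempty. -/
def GammaPM {Γ A : Type} [DecidableEq A] (I : Γ → Γ → Prop)
    (η : TraceMonoid I →* QueueMonoid A) (a : Γ) : Prop :=
  ∃ w : List (A ⊕ A),
    (queueCon A).mk' (FreeMonoid.ofList w) = η ((traceCon I).mk' (FreeMonoid.of a)) ∧
    ppr w ≠ [] ∧ npr w ≠ []


set_option linter.unusedSectionVars false

namespace QP
variable {A : Type} [DecidableEq A]

@[simp] lemma ppr_nil : ppr ([] : List (A ⊕ A)) = [] := rfl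
@[simp] lemma npr_nil : npr ([] : List (A ⊕ A)) = [] := rfl
@[simp] lemma ppr_cons_inl (a : A) (s : List (A ⊕ A)) : ppr (Sum.inl a :: s) = a :: ppr s := rfl
@[simp] lemma ppr_cons_inr (a : A) (s : List (A ⊕ A)) : ppr (Sum.inr a :: s) = ppr s := rfl
@[simp] lemma npr_cons_inl (a : A) (s : List (A ⊕ A)) : npr (Sum.inl a :: s) = npr s := rfl
@[simp] lemma npr_cons_inr (a : A) (s : List (A ⊕ A)) : npr (Sum.inr a :: s) = a :: npr s := rfl
lemma ppr_append (s t : List (A ⊕ A)) : ppr (s ++ t) = ppr s ++ ppr t :=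
  List.filterMap_append
lemma npr_append (s t : List (A ⊕ A)) : npr (s ++ t) = npr s ++ npr t :=
  List.filterMap_append

@[simp] lemma qact_none (s : List (A ⊕ A)) : qact A none s = none := by
  induction s with
  | nil => rfl
  | cons x s ih => show qact A (qstep A none x) s = none; simpa [qstep] using ih

lemma qact_append (q : Option (List A)) (s t : List (A ⊕ A)) :
    qact A q (s ++ t) = qact A (qact A q s) t := List.foldl_append

lemma qact_cons (q : Option (List A)) (x : A ⊕ A) (s : List (A ⊕ A)) :
    qact A q (x :: s) = qact A (qstep A q x) s := rfl

def wt : A ⊕ A → ℤ := Sum.elim (fun _ => -1) (fun _ => 1)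

def mx : List (A ⊕ A) → ℤ
  | [] => 0
  | x :: s => max 0 (wt x + mx s)

def dl (s : List (A ⊕ A)) : ℤ := (npr s).length - (ppr s).length

@[simp] lemma dl_nil : dl ([] : List (A ⊕ A)) = 0 := rfl
@[simp] lemma mx_nil : mx ([] : List (A ⊕ A)) = 0 := rfl
lemma mx_cons (x : A ⊕ A) (s : List (A ⊕ A)) : mx (x :: s) = max 0 (wt x + mx s) := rfl

lemma dl_cons (x : A ⊕ A) (s : List (A ⊕ A)) : dl (x :: s) = wt x + dl s := by
  cases x <;> simp [dl, wt] <;> ring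

lemma dl_append (s t : List (A ⊕ A)) : dl (s ++ t) = dl s + dl t := by
  simp [dl, ppr_append, npr_append]; ring

lemma mx_nonneg (s : List (A ⊕ A)) : 0 ≤ mx s := by
  cases s with
  | nil => simp
  | cons x s => exact le_max_left _ _

lemma mx_append (s t : List (A ⊕ A)) : mx (s ++ t) = max (mx s) (dl s + mx t) := by
  induction s with
  | nil => simp [mx_nonneg t]
  | cons x s ih =>
    show max 0 (wt x + mx (s ++ t)) = max (max 0 (wt x + mx s)) (dl (x :: s) + mx t)
    rw [ih, dl_cons, ← max_add_add_left, ← max_assoc, add_assoc]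

lemma mx_le_npr (s : List (A ⊕ A)) : mx s ≤ ((npr s).length : ℤ) := by
  induction s with
  | nil => simp
  | cons x s ih =>
    cases x with
    | inl a =>
      rw [mx_cons, npr_cons_inl, max_le_iff]
      have := mx_nonneg s
      refine ⟨Int.natCast_nonneg _, ?_⟩
      simp only [wt, Sum.elim_inl]
      linarith
    | inr a =>
      rw [mx_cons, npr_cons_inr, max_le_iff, List.length_cons]
      refine ⟨Int.natCast_nonneg _, ?_⟩
      simp only [wt, Sum.elim_inr]
      push_cast
      linarith

lemma dl_le_mx (s : List (A ⊕ A)) : dl s ≤ mx s := by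
  induction s with
  | nil => simp
  | cons x s ih =>
    rw [dl_cons, mx_cons]
    exact le_trans (by linarith) (le_max_right 0 (wt x + mx s))

theorem sim (s : List (A ⊕ A)) : ∀ q : List A, qact A (some q) s =
    if npr s <+: q ++ ppr s ∧ mx s ≤ (q.length : ℤ) then
      some ((q ++ ppr s).drop (npr s).length) else none := by
  induction s with
  | nil =>
    intro q
    rw [if_pos]
    · simp [qact]
    · simp
  | cons x s ih =>
    intro q
    cases x with
    | inl a =>
      rw [qact_cons]
      show qact A (some (q ++ [a])) s = _
      rw [ih (q ++ [a])]
      have hc : (npr s <+: (q ++ [a]) ++ ppr s ∧ mx s ≤ ((q ++ [a]).length : ℤ)) ↔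
          (npr (Sum.inl a :: s) <+: q ++ ppr (Sum.inl a :: s) ∧
            mx (Sum.inl a :: s) ≤ (q.length : ℤ)) := by
        simp only [npr_cons_inl, ppr_cons_inl, List.append_assoc, List.singleton_append,
          List.length_append, List.length_singleton, mx_cons, wt, Sum.elim_inl]
        constructor
        · rintro ⟨h1, h2⟩
          refine ⟨h1, ?_⟩
          rw [max_le_iff]
          push_cast at h2
          exact ⟨Int.natCast_nonneg _, by linarith⟩
        · rintro ⟨h1, h2⟩
          refine ⟨h1, ?_⟩
          have h3 : (-1:ℤ) + mx s ≤ max 0 (-1 + mx s) := le_max_right _ _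
          push_cast
          linarith
      refine if_congr hc ?_ rfl
      simp [List.append_assoc]
    | inr a =>
      cases q with
      | nil =>
        rw [qact_cons]
        show qact A none s = _
        rw [qact_none, if_neg]
        rintro ⟨-, h2⟩
        rw [mx_cons] at h2
        have h3 : wt (Sum.inr a) + mx s ≤ max 0 (wt (Sum.inr a) + mx s) := le_max_right _ _
        have h4 := mx_nonneg s
        simp only [wt, Sum.elim_inr, List.length_nil, Nat.cast_zero] at h2 h3
        linarith
      | cons b q' =>
        by_cases hb : b = a
        · subst hb
          rw [qact_cons]
          have hq : qstep A (some (b :: q')) (Sum.inr b) = some q' := by simp [qstep]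
          rw [hq, ih q']
          have hc : (npr s <+: q' ++ ppr s ∧ mx s ≤ (q'.length : ℤ)) ↔
              (npr (Sum.inr b :: s) <+: (b :: q') ++ ppr (Sum.inr b :: s) ∧
                mx (Sum.inr b :: s) ≤ ((b :: q').length : ℤ)) := by
            simp only [npr_cons_inr, ppr_cons_inr, List.cons_append, List.cons_prefix_cons,
              true_and, List.length_cons, mx_cons, wt, Sum.elim_inr]
            constructor
            · rintro ⟨h1, h2⟩
              refine ⟨h1, ?_⟩
              rw [max_le_iff]
              push_cast
              exact ⟨by positivity, by linarith⟩
            · rintro ⟨h1, h2⟩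
              refine ⟨h1, ?_⟩
              have h3 : (1:ℤ) + mx s ≤ max 0 (1 + mx s) := le_max_right _ _
              push_cast at h2
              linarith
          refine if_congr hc ?_ rfl
          simp
        · rw [qact_cons]
          have hq : qstep A (some (b :: q')) (Sum.inr a) = none := by simp [qstep, hb]
          rw [hq, qact_none, if_neg]
          rintro ⟨h1, -⟩
          simp only [npr_cons_inr, ppr_cons_inr, List.cons_append, List.cons_prefix_cons] at h1
          exact hb h1.1.symm

theorem qequiv_of_inv {s t : List (A ⊕ A)} (h1 : ppr s = ppr t) (h2 : npr s = npr t)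
    (h3 : mx s = mx t) : QEquiv A s t := by
  intro q
  cases q with
  | none => simp
  | some q => rw [sim, sim, h1, h2, h3]



section pw

variable {α : Type*}

def pw (l : List α) : ℕ → List α
  | 0 => []
  | n + 1 => l ++ pw l n

@[simp] lemma pw_zero (l : List α) : pw l 0 = [] := rfl
lemma pw_succ (l : List α) (n : ℕ) : pw l (n + 1) = l ++ pw l n := rfl
@[simp] lemma pw_one (l : List α) : pw l 1 = l := by simp [pw]

lemma length_pw (l : List α) (n : ℕ) : (pw l n).length = n * l.length := by
  induction n with
  | zero => simp
  | succ n ih => simp [pw_succ, ih, Nat.succ_mul]; ring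

lemma comm_append {p l₁ l₂ : List α} (h₁ : l₁ ++ p = p ++ l₁) (h₂ : l₂ ++ p = p ++ l₂) :
    (l₁ ++ l₂) ++ p = p ++ (l₁ ++ l₂) := by
  rw [List.append_assoc, h₂, ← List.append_assoc, h₁, List.append_assoc]

lemma comm_pw {p l : List α} (h : l ++ p = p ++ l) (n : ℕ) : pw l n ++ p = p ++ pw l n := by
  induction n with
  | zero => simp
  | succ n ih => rw [pw_succ]; exact comm_append h ih

lemma comm_pwr {p z : List α} (h : z ++ p = p ++ z) (K : ℕ) :
    z ++ pw p K = pw p K ++ z := by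
  induction K with
  | zero => simp
  | succ K ih =>
    rw [pw_succ, ← List.append_assoc, h, List.append_assoc, ih, List.append_assoc]

lemma eq_of_comm_of_length {p z₁ z₂ : List α} (hp : p ≠ [])
    (h₁ : z₁ ++ p = p ++ z₁) (h₂ : z₂ ++ p = p ++ z₂)
    (hl : z₁.length = z₂.length) : z₁ = z₂ := by
  have hpl : 1 ≤ p.length := List.length_pos_iff.2 hp
  have key : ∀ z : List α, z ++ p = p ++ z → z.length ≤ z₁.length → z = (pw p z₁.length).take z.length := by
    intro z hz hle
    have hc := comm_pwr hz z₁.length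
    have e1 : z = (z ++ pw p z₁.length).take z.length := by rw [List.take_left]
    rw [hc] at e1
    have hlen : z.length ≤ (pw p z₁.length).length := by
      rw [length_pw]
      calc z.length ≤ z₁.length := hle
        _ ≤ z₁.length * p.length := Nat.le_mul_of_pos_right _ hpl
    calc z = (pw p z₁.length ++ z).take z.length := e1
      _ = (pw p z₁.length).take z.length := List.take_append_of_le_length hlen
  have e1 := key z₁ h₁ le_rfl
  have e2 := key z₂ h₂ hl.ge
  rw [e1, e2, hl]
end pw

lemma ppr_pw (s : List (A ⊕ A)) (n : ℕ) : ppr (pw s n) = pw (ppr s) n := by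
  induction n with
  | zero => rfl
  | succ n ih => rw [pw_succ, pw_succ, ppr_append, ih]

lemma npr_pw (s : List (A ⊕ A)) (n : ℕ) : npr (pw s n) = pw (npr s) n := by
  induction n with
  | zero => rfl
  | succ n ih => rw [pw_succ, pw_succ, npr_append, ih]


lemma qact_full (s : List (A ⊕ A)) (r : List A) :
    qact A (some (npr s ++ r)) s = some (r ++ ppr s) := by
  have hcond : npr s <+: (npr s ++ r) ++ ppr s ∧ mx s ≤ (((npr s ++ r).length : ℕ) : ℤ) := by
    constructor
    · rw [List.append_assoc]; exact List.prefix_append _ _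
    · calc mx s ≤ ((npr s).length : ℤ) := mx_le_npr s
        _ ≤ _ := by simp
  rw [sim, if_pos hcond, List.append_assoc, List.drop_left]

lemma npr_prefix_of_qequiv {s t : List (A ⊕ A)} (h : QEquiv A s t) (r : List A) :
    npr t <+: (npr s ++ r) ++ ppr t := by
  have h1 := (h (some (npr s ++ r))).symm
  rw [qact_full, sim] at h1
  by_cases hc : npr t <+: (npr s ++ r) ++ ppr t ∧ mx t ≤ (((npr s ++ r).length : ℕ) : ℤ)
  · exact hc.1
  · rw [if_neg hc] at h1; exact absurd h1 (by simp)

lemma npr_len_le_of_qequiv {e f : A} (hef : e ≠ f) {s t : List (A ⊕ A)} (h : QEquiv A s t) :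
    (npr t).length ≤ (npr s).length := by
  by_contra hlt
  push_neg at hlt
  have he := npr_prefix_of_qequiv h [e]
  have hf := npr_prefix_of_qequiv h [f]
  have hlen : ∀ x : A, (npr s).length < ((npr s ++ [x]) ++ ppr t).length := by
    intro x; simp
  have ge : (npr t)[(npr s).length]'hlt = e := by
    have h2 := he.getElem hlt
    rw [h2]
    rw [List.getElem_append_left (by simp), List.getElem_concat_length]
    rfl
  have gf : (npr t)[(npr s).length]'hlt = f := by
    have h2 := hf.getElem hlt
    rw [h2]
    rw [List.getElem_append_left (by simp), List.getElem_concat_length]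
    rfl
  exact hef (ge ▸ gf)

lemma npr_eq_of_qequiv {e f : A} (hef : e ≠ f) {s t : List (A ⊕ A)} (h : QEquiv A s t) :
    npr s = npr t := by
  have h1 : (npr t).length ≤ (npr s).length := npr_len_le_of_qequiv hef h
  have h2 : (npr s).length ≤ (npr t).length :=
    npr_len_le_of_qequiv hef (fun q => (h q).symm)
  have hp : npr t <+: npr s ++ ppr t := by
    have := npr_prefix_of_qequiv h []
    simpa using this
  have hpre : npr t <+: npr s := by
    have e1 : npr t = (npr s ++ ppr t).take (npr t).length := List.prefix_iff_eq_take.1 hp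
    rw [List.take_append_of_le_length h1] at e1
    rw [e1]; exact List.take_prefix _ _
  exact (hpre.eq_of_length_le h2).symm

lemma ppr_eq_of_qequiv {e f : A} (hef : e ≠ f) {s t : List (A ⊕ A)} (h : QEquiv A s t) :
    ppr s = ppr t := by
  have hn := npr_eq_of_qequiv hef h
  have h1 := qact_full s []
  have h2 := qact_full t []
  have h3 := h (some (npr s ++ []))
  rw [h1] at h3
  rw [hn] at h3
  rw [h2] at h3
  simpa using h3

lemma dl_pw (z : List (A ⊕ A)) (n : ℕ) : dl (pw z n) = (n : ℤ) * dl z := by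
  induction n with
  | zero => simp
  | succ n ih => rw [pw_succ, dl_append, ih]; push_cast; ring

lemma mx_pw_nonpos {z : List (A ⊕ A)} (h : dl z ≤ 0) : ∀ {n : ℕ}, 1 ≤ n →
    mx (pw z n) = mx z := by
  intro n
  induction n with
  | zero => intro h0; exact absurd h0 (by omega)
  | succ n ih =>
    intro _
    rcases Nat.eq_zero_or_pos n with h0 | h0
    · subst h0; simp
    · rw [pw_succ, mx_append, ih h0]
      exact max_eq_left (by linarith [dl_le_mx z])

lemma mx_pw_nonneg {z : List (A ⊕ A)} (h : 0 ≤ dl z) : ∀ {n : ℕ}, 1 ≤ n →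
    mx (pw z n) = mx z + ((n : ℤ) - 1) * dl z := by
  intro n
  induction n with
  | zero => intro h0; exact absurd h0 (by omega)
  | succ n ih =>
    intro _
    rcases Nat.eq_zero_or_pos n with h0 | h0
    · subst h0; simp
    · rw [pw_succ, mx_append, ih h0]
      have h1 : dl z + (mx z + ((n:ℤ) - 1) * dl z) = mx z + (((n:ℕ)+1:ℤ) - 1) * dl z := by ring
      rw [h1]
      have h2 : (0:ℤ) ≤ (((n:ℕ)+1:ℤ) - 1) * dl z := by
        have : (0:ℤ) ≤ ((n:ℕ):ℤ) := Int.natCast_nonneg _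
        have := mul_nonneg (show (0:ℤ) ≤ (((n:ℕ)+1:ℤ) - 1) by linarith) h
        linarith
      have h3 : max (mx z) (mx z + (((n:ℕ)+1:ℤ) - 1) * dl z) = mx z + (((n:ℕ)+1:ℤ) - 1) * dl z :=
        max_eq_right (by linarith)
      rw [h3]
      push_cast
      ring

lemma mx_pw_le (z : List (A ⊕ A)) (n : ℕ) :
    mx (pw z n) ≤ (n : ℤ) * ((npr z).length : ℤ) := by
  have h := mx_le_npr (pw z n)
  rw [npr_pw, length_pw] at h
  push_cast at h
  exact h

lemma mx_four (s₁ s₂ s₃ s₄ : List (A ⊕ A)) :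
    mx (s₁ ++ (s₂ ++ (s₃ ++ s₄))) =
      max (mx s₁) (max (dl s₁ + mx s₂) (max (dl s₁ + dl s₂ + mx s₃)
        (dl s₁ + dl s₂ + dl s₃ + mx s₄))) := by
  rw [mx_append s₁, mx_append s₂, mx_append s₃]
  have e1 : dl s₂ + max (mx s₃) (dl s₃ + mx s₄) =
      max (dl s₂ + mx s₃) (dl s₂ + (dl s₃ + mx s₄)) := (max_add_add_left _ _ _).symm
  rw [e1]
  have e2 : dl s₁ + max (mx s₂) (max (dl s₂ + mx s₃) (dl s₂ + (dl s₃ + mx s₄))) =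
      max (dl s₁ + mx s₂) (dl s₁ + max (dl s₂ + mx s₃) (dl s₂ + (dl s₃ + mx s₄))) :=
    (max_add_add_left _ _ _).symm
  rw [e2]
  have e3 : dl s₁ + max (dl s₂ + mx s₃) (dl s₂ + (dl s₃ + mx s₄)) =
      max (dl s₁ + (dl s₂ + mx s₃)) (dl s₁ + (dl s₂ + (dl s₃ + mx s₄))) :=
    (max_add_add_left _ _ _).symm
  rw [e3]
  simp only [add_assoc]

lemma listeq_of_subsing {hA : ∀ x y : A, x = y} : ∀ l l' : List A,
    l.length = l'.length → l = l' := by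
  intro l
  induction l with
  | nil => intro l' h; cases l' with
    | nil => rfl
    | cons y l'' => simp at h
  | cons x l ih =>
    intro l' h
    cases l' with
    | nil => simp at h
    | cons y l'' =>
      simp only [List.length_cons, Nat.add_right_cancel_iff] at h
      rw [hA x y, ih l'' h]

lemma comm_proj {u v : List (A ⊕ A)} (h : QEquiv A (u ++ v) (v ++ u)) :
    ppr v ++ ppr u = ppr u ++ ppr v ∧ npr v ++ npr u = npr u ++ npr v := by
  by_cases hA : ∀ x y : A, x = y
  · constructor <;>
      exact listeq_of_subsing (hA := hA) _ _ (by simp [List.length_append, Nat.add_comm])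
  · push_neg at hA
    obtain ⟨e, f, hef⟩ := hA
    have h1 := ppr_eq_of_qequiv hef h
    have h2 := npr_eq_of_qequiv hef h
    rw [ppr_append, ppr_append] at h1
    rw [npr_append, npr_append] at h2
    exact ⟨h1.symm, h2.symm⟩

-- kernel existence

lemma kernel_exists (i i' m j j' m' : ℤ) (hm : 1 ≤ m) :
    ∃ k₁ k₂ k₃ : ℤ, ¬(k₁ = 0 ∧ k₂ = 0 ∧ k₃ = 0) ∧
      i * k₁ + i' * k₂ + m * k₃ = 0 ∧ j * k₁ + j' * k₂ + m' * k₃ = 0 := by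
  by_cases hc : i' * m' - m * j' = 0 ∧ m * j - i * m' = 0 ∧ i * j' - i' * j = 0
  · refine ⟨m, 0, -i, ?_, by ring, ?_⟩
    · rintro ⟨h, -, -⟩; omega
    · obtain ⟨-, h2, -⟩ := hc
      linear_combination h2
  · refine ⟨i' * m' - m * j', m * j - i * m', i * j' - i' * j, hc, by ring, by ring⟩



lemma max4_le {a1 a2 a3 a4 c : ℤ} (h1 : a1 ≤ c) (h2 : a2 ≤ c) (h3 : a3 ≤ c) (h4 : a4 ≤ c) :
    max a1 (max a2 (max a3 a4)) ≤ c :=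
  max_le h1 (max_le h2 (max_le h3 h4))
lemma le_max4_1 {a1 a2 a3 a4 : ℤ} : a1 ≤ max a1 (max a2 (max a3 a4)) := le_max_left _ _
lemma le_max4_2 {a1 a2 a3 a4 : ℤ} : a2 ≤ max a1 (max a2 (max a3 a4)) :=
  le_trans (le_max_left _ _) (le_max_right _ _)
lemma le_max4_3 {a1 a2 a3 a4 : ℤ} : a3 ≤ max a1 (max a2 (max a3 a4)) :=
  le_trans (le_trans (le_max_left _ _) (le_max_right _ _)) (le_max_right _ _)
lemma le_max4_4 {a1 a2 a3 a4 : ℤ} : a4 ≤ max a1 (max a2 (max a3 a4)) :=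
  le_trans (le_trans (le_max_right _ _) (le_max_right _ _)) (le_max_right _ _)

lemma toNat_cast_le_abs (k : ℤ) : (k.toNat : ℤ) ≤ |k| := by
  rcases le_total 0 k with h | h
  · rw [Int.toNat_of_nonneg h]; exact le_abs_self k
  · rw [Int.toNat_of_nonpos h]; positivity

lemma toNat_diff (k : ℤ) : (k.toNat : ℤ) - ((-k).toNat : ℤ) = k := Int.toNat_sub_toNat_neg k

lemma prod_lb {d a S K : ℤ} (hd : |d| ≤ S) (ha : 0 ≤ a) (haK : a ≤ K) : -(S*K) ≤ a * d := by
  rcases abs_le.1 hd with ⟨h1, h2⟩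
  nlinarith
lemma prod_ub {d a S K : ℤ} (hd : |d| ≤ S) (ha : 0 ≤ a) (haK : a ≤ K) : a * d ≤ S*K := by
  rcases abs_le.1 hd with ⟨h1, h2⟩
  nlinarith

set_option maxHeartbeats 1000000 in
lemma H (u v w : List (A ⊕ A)) (k₁ k₂ k₃ : ℤ)
    (hcase : dl u < 0 ∨ 0 < dl u ∨ (dl u = 0 ∧ (0 < dl w ∨ (dl v ≤ 0 ∧ dl w ≤ 0))))
    (dk : dl v * k₁ + dl w * k₂ + dl u * k₃ = 0) :
    ∃ a0 b0 g1 g2 : ℕ,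
      mx (pw u g1 ++ (pw v (a0 + k₁.toNat) ++ (pw w (b0 + k₂.toNat) ++ pw u (g2 + k₃.toNat)))) =
      mx (pw u g1 ++ (pw v (a0 + (-k₁).toNat) ++ (pw w (b0 + (-k₂).toNat)
        ++ pw u (g2 + (-k₃).toNat)))) := by
  set S : ℤ := |dl v| + |dl w| + |dl u| + ((npr u).length : ℤ) + ((npr v).length : ℤ)
    + ((npr w).length : ℤ) + mx u + mx v + mx w + 1 with hSdef
  set K : ℤ := |k₁| + |k₂| + |k₃| + 2 with hKdef
  have h1 := abs_nonneg (dl v); have h2 := abs_nonneg (dl w); have h3 := abs_nonneg (dl u)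
  have h4 := mx_nonneg u; have h5 := mx_nonneg v; have h6 := mx_nonneg w
  have h7 : (0:ℤ) ≤ ((npr u).length : ℤ) := Int.natCast_nonneg _
  have h8 : (0:ℤ) ≤ ((npr v).length : ℤ) := Int.natCast_nonneg _
  have h9 : (0:ℤ) ≤ ((npr w).length : ℤ) := Int.natCast_nonneg _
  have ha1 := abs_nonneg k₁; have ha2 := abs_nonneg k₂; have ha3 := abs_nonneg k₃
  have hS1 : 1 ≤ S := by simp only [hSdef]; linarith
  have hK2 : 2 ≤ K := by simp only [hKdef]; linarith
  have hSK2 : 2 ≤ S * K := by nlinarith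
  have hSK0 : 0 ≤ S * K := by linarith
  have hdvS : |dl v| ≤ S := by simp only [hSdef]; linarith
  have hdwS : |dl w| ≤ S := by simp only [hSdef]; linarith
  have hduS : |dl u| ≤ S := by simp only [hSdef]; linarith
  have hjuS : ((npr u).length : ℤ) ≤ S := by simp only [hSdef]; linarith
  have hjvS : ((npr v).length : ℤ) ≤ S := by simp only [hSdef]; linarith
  have hjwS : ((npr w).length : ℤ) ≤ S := by simp only [hSdef]; linarith
  have hmuS : mx u ≤ S := by simp only [hSdef]; linarith
  have hmvS : mx v ≤ S := by simp only [hSdef]; linarith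
  have hmwS : mx w ≤ S := by simp only [hSdef]; linarith
  have habs1 : |k₁| ≤ |k₁| + |k₂| + |k₃| := by linarith
  have habs2 : |k₂| ≤ |k₁| + |k₂| + |k₃| := by linarith
  have habs3 : |k₃| ≤ |k₁| + |k₂| + |k₃| := by linarith
  have habs1' : |(-k₁)| ≤ |k₁| + |k₂| + |k₃| := by rw [abs_neg]; exact habs1
  have habs2' : |(-k₂)| ≤ |k₁| + |k₂| + |k₃| := by rw [abs_neg]; exact habs2
  have habs3' : |(-k₃)| ≤ |k₁| + |k₂| + |k₃| := by rw [abs_neg]; exact habs3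
  have hexp : ∀ k : ℤ, |k| ≤ |k₁| + |k₂| + |k₃| → ((1 + k.toNat : ℕ) : ℤ) ≤ K := by
    intro k hk
    have h0 := toNat_cast_le_abs k
    push_cast
    simp only [hKdef]
    linarith
  have hmxpw : ∀ (z : List (A ⊕ A)) (n : ℕ), ((npr z).length : ℤ) ≤ S → ((n:ℕ):ℤ) ≤ K →
      mx (pw z n) ≤ S * K := by
    intro z n hz hn
    have h0 := mx_pw_le z n
    have h0' : ((n:ℕ):ℤ) * ((npr z).length : ℤ) ≤ S * K :=
      prod_ub (by rwa [abs_of_nonneg (Int.natCast_nonneg _)]) (Int.natCast_nonneg _) hn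
    linarith
  have hSSK : S ≤ S * K := by nlinarith
  obtain ⟨G, hG6, hGpos⟩ : ∃ G : ℕ, 6 * S * K + 1 ≤ ((G:ℕ) : ℤ) ∧ 1 ≤ G := by
    refine ⟨(6 * S * K).toNat + 1, ?_, by omega⟩
    push_cast
    rw [Int.toNat_of_nonneg (by positivity)]
  -- case split
  rcases hcase with hdu | hdu | ⟨hdu0, hsub⟩
  · -- du < 0 : bases a0 = 1, b0 = 1, g1 = G, g2 = 1
    refine ⟨1, 1, G, 1, ?_⟩
    rw [mx_four, mx_four]
    simp only [dl_pw]
    rw [mx_pw_nonpos hdu.le hGpos, mx_pw_nonpos hdu.le (show 1 ≤ 1 + k₃.toNat by omega),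
        mx_pw_nonpos hdu.le (show 1 ≤ 1 + (-k₃).toNat by omega)]
    -- all non-first terms ≤ mx u on both sides
    have hA1 := hexp k₁ habs1
    have hA2 := hexp (-k₁) habs1'
    have hB1 := hexp k₂ habs2
    have hB2 := hexp (-k₂) habs2'
    have hGdu : ((G:ℕ):ℤ) * dl u ≤ -(6 * S * K + 1) := by
      have e1 : ((G:ℕ):ℤ) * dl u ≤ ((G:ℕ):ℤ) * (-1) :=
        mul_le_mul_of_nonneg_left (by linarith) (Int.natCast_nonneg _)
      have e2 : ((G:ℕ):ℤ) * (-1) = -((G:ℕ):ℤ) := by ring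
      linarith
    have hp1 : -(S*K) ≤ ((1 + k₁.toNat : ℕ) : ℤ) * dl v ∧ ((1 + k₁.toNat : ℕ) : ℤ) * dl v ≤ S*K :=
      ⟨prod_lb hdvS (Int.natCast_nonneg _) hA1, prod_ub hdvS (Int.natCast_nonneg _) hA1⟩
    have hp2 : -(S*K) ≤ ((1 + (-k₁).toNat : ℕ) : ℤ) * dl v ∧ ((1 + (-k₁).toNat : ℕ) : ℤ) * dl v ≤ S*K :=
      ⟨prod_lb hdvS (Int.natCast_nonneg _) hA2, prod_ub hdvS (Int.natCast_nonneg _) hA2⟩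
    have hq1 : -(S*K) ≤ ((1 + k₂.toNat : ℕ) : ℤ) * dl w ∧ ((1 + k₂.toNat : ℕ) : ℤ) * dl w ≤ S*K :=
      ⟨prod_lb hdwS (Int.natCast_nonneg _) hB1, prod_ub hdwS (Int.natCast_nonneg _) hB1⟩
    have hq2 : -(S*K) ≤ ((1 + (-k₂).toNat : ℕ) : ℤ) * dl w ∧ ((1 + (-k₂).toNat : ℕ) : ℤ) * dl w ≤ S*K :=
      ⟨prod_lb hdwS (Int.natCast_nonneg _) hB2, prod_ub hdwS (Int.natCast_nonneg _) hB2⟩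
    have hm1 : mx (pw v (1 + k₁.toNat)) ≤ S * K := hmxpw v _ hjvS hA1
    have hm2 : mx (pw v (1 + (-k₁).toNat)) ≤ S * K := hmxpw v _ hjvS hA2
    have hn1 : mx (pw w (1 + k₂.toNat)) ≤ S * K := hmxpw w _ hjwS hB1
    have hn2 : mx (pw w (1 + (-k₂).toNat)) ≤ S * K := hmxpw w _ hjwS hB2
    apply le_antisymm
    · refine max4_le ?_ ?_ ?_ ?_
      · exact le_max4_1
      · refine le_trans ?_ le_max4_1
        linarith [hp1.1, hp1.2, hm1]
      · refine le_trans ?_ le_max4_1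
        linarith [hp1.1, hq1.1, hn1]
      · refine le_trans ?_ le_max4_1
        linarith [hp1.1, hq1.1]
    · refine max4_le ?_ ?_ ?_ ?_
      · exact le_max4_1
      · refine le_trans ?_ le_max4_1
        linarith [hp2.1, hp2.2, hm2]
      · refine le_trans ?_ le_max4_1
        linarith [hp2.1, hq2.1, hn2]
      · refine le_trans ?_ le_max4_1
        linarith [hp2.1, hq2.1]
  · -- 0 < du : bases a0 = 1, b0 = 1, g1 = 1, g2 = G
    refine ⟨1, 1, 1, G, ?_⟩
    rw [mx_four, mx_four]
    simp only [pw_one]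
    simp only [dl_pw]
    rw [mx_pw_nonneg hdu.le (show 1 ≤ G + k₃.toNat by omega),
        mx_pw_nonneg hdu.le (show 1 ≤ G + (-k₃).toNat by omega)]
    have hA1 := hexp k₁ habs1
    have hA2 := hexp (-k₁) habs1'
    have hB1 := hexp k₂ habs2
    have hB2 := hexp (-k₂) habs2'
    have hA : ((1 + k₁.toNat : ℕ) : ℤ) = ((1 + (-k₁).toNat : ℕ) : ℤ) + k₁ := by
      rw [Nat.cast_add, Nat.cast_add]; linarith [toNat_diff k₁]
    have hB : ((1 + k₂.toNat : ℕ) : ℤ) = ((1 + (-k₂).toNat : ℕ) : ℤ) + k₂ := by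
      rw [Nat.cast_add, Nat.cast_add]; linarith [toNat_diff k₂]
    have hC : ((G + k₃.toNat : ℕ) : ℤ) = ((G + (-k₃).toNat : ℕ) : ℤ) + k₃ := by
      rw [Nat.cast_add, Nat.cast_add]; linarith [toNat_diff k₃]
    have hp1 : -(S*K) ≤ ((1 + k₁.toNat : ℕ) : ℤ) * dl v :=
      prod_lb hdvS (Int.natCast_nonneg _) hA1
    have hp2 : -(S*K) ≤ ((1 + (-k₁).toNat : ℕ) : ℤ) * dl v :=
      prod_lb hdvS (Int.natCast_nonneg _) hA2
    have hq1 : -(S*K) ≤ ((1 + k₂.toNat : ℕ) : ℤ) * dl w :=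
      prod_lb hdwS (Int.natCast_nonneg _) hB1
    have hq2 : -(S*K) ≤ ((1 + (-k₂).toNat : ℕ) : ℤ) * dl w :=
      prod_lb hdwS (Int.natCast_nonneg _) hB2
    have hm1 : mx (pw v (1 + k₁.toNat)) ≤ S * K := hmxpw v _ hjvS hA1
    have hm2 : mx (pw v (1 + (-k₁).toNat)) ≤ S * K := hmxpw v _ hjvS hA2
    have hn1 : mx (pw w (1 + k₂.toNat)) ≤ S * K := hmxpw w _ hjwS hB1
    have hn2 : mx (pw w (1 + (-k₂).toNat)) ≤ S * K := hmxpw w _ hjwS hB2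
    have hγ1 : 6 * S * K + 1 ≤ ((G + k₃.toNat : ℕ) : ℤ) := by
      rw [Nat.cast_add]
      have := Int.natCast_nonneg k₃.toNat
      linarith [hG6]
    have hγ2 : 6 * S * K + 1 ≤ ((G + (-k₃).toNat : ℕ) : ℤ) := by
      rw [Nat.cast_add]
      have := Int.natCast_nonneg (-k₃).toNat
      linarith [hG6]
    have hγdu1 : ((G + k₃.toNat : ℕ) : ℤ) - 1 ≤ (((G + k₃.toNat : ℕ) : ℤ) - 1) * dl u := by
      have e1 := mul_le_mul_of_nonneg_left (show (1:ℤ) ≤ dl u by linarith)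
        (show (0:ℤ) ≤ ((G + k₃.toNat : ℕ) : ℤ) - 1 by linarith)
      rw [mul_one] at e1
      exact e1
    have hγdu2 : ((G + (-k₃).toNat : ℕ) : ℤ) - 1 ≤ (((G + (-k₃).toNat : ℕ) : ℤ) - 1) * dl u := by
      have e1 := mul_le_mul_of_nonneg_left (show (1:ℤ) ≤ dl u by linarith)
        (show (0:ℤ) ≤ ((G + (-k₃).toNat : ℕ) : ℤ) - 1 by linarith)
      rw [mul_one] at e1
      exact e1
    have e4 : dl u + ((1 + k₁.toNat : ℕ) : ℤ) * dl v + ((1 + k₂.toNat : ℕ) : ℤ) * dl w +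
        (mx u + (((G + k₃.toNat : ℕ) : ℤ) - 1) * dl u) =
        dl u + ((1 + (-k₁).toNat : ℕ) : ℤ) * dl v + ((1 + (-k₂).toNat : ℕ) : ℤ) * dl w +
        (mx u + (((G + (-k₃).toNat : ℕ) : ℤ) - 1) * dl u) := by
      linear_combination dl v * hA + dl w * hB + dl u * hC + dk
    apply le_antisymm
    · refine max4_le ?_ ?_ ?_ ?_
      · refine le_trans ?_ le_max4_4
        linarith [e4, hp1, hq1, hγdu1, hγ1]
      · refine le_trans ?_ le_max4_4
        linarith [e4, hm1, hp1, hq1, hγdu1, hγ1]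
      · refine le_trans ?_ le_max4_4
        linarith [e4, hn1, hp1, hq1, hγdu1, hγ1]
      · exact le_trans (le_of_eq e4) le_max4_4
    · refine max4_le ?_ ?_ ?_ ?_
      · refine le_trans ?_ le_max4_4
        linarith [e4, hp2, hq2, hγdu2, hγ2]
      · refine le_trans ?_ le_max4_4
        linarith [e4, hm2, hp2, hq2, hγdu2, hγ2]
      · refine le_trans ?_ le_max4_4
        linarith [e4, hn2, hp2, hq2, hγdu2, hγ2]
      · exact le_trans (le_of_eq e4.symm) le_max4_4
  · -- du = 0
    rcases hsub with hdw | ⟨hdv, hdw⟩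
    · -- 0 < dw : bases a0 = 1, b0 = G, g1 = 1, g2 = 1
      refine ⟨1, G, 1, 1, ?_⟩
      rw [mx_four, mx_four]
      simp only [pw_one]
      simp only [dl_pw]
      rw [mx_pw_nonneg hdw.le (show 1 ≤ G + k₂.toNat by omega),
          mx_pw_nonneg hdw.le (show 1 ≤ G + (-k₂).toNat by omega),
          mx_pw_nonpos hdu0.le (show 1 ≤ 1 + k₃.toNat by omega),
          mx_pw_nonpos hdu0.le (show 1 ≤ 1 + (-k₃).toNat by omega)]
      have hA1 := hexp k₁ habs1
      have hA2 := hexp (-k₁) habs1'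
      have hA : ((1 + k₁.toNat : ℕ) : ℤ) = ((1 + (-k₁).toNat : ℕ) : ℤ) + k₁ := by
        rw [Nat.cast_add, Nat.cast_add]; linarith [toNat_diff k₁]
      have hB : ((G + k₂.toNat : ℕ) : ℤ) = ((G + (-k₂).toNat : ℕ) : ℤ) + k₂ := by
        rw [Nat.cast_add, Nat.cast_add]; linarith [toNat_diff k₂]
      have hC : ((1 + k₃.toNat : ℕ) : ℤ) = ((1 + (-k₃).toNat : ℕ) : ℤ) + k₃ := by
        rw [Nat.cast_add, Nat.cast_add]; linarith [toNat_diff k₃]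
      have hp1 : -(S*K) ≤ ((1 + k₁.toNat : ℕ) : ℤ) * dl v :=
        prod_lb hdvS (Int.natCast_nonneg _) hA1
      have hp2 : -(S*K) ≤ ((1 + (-k₁).toNat : ℕ) : ℤ) * dl v :=
        prod_lb hdvS (Int.natCast_nonneg _) hA2
      have hm1 : mx (pw v (1 + k₁.toNat)) ≤ S * K := hmxpw v _ hjvS hA1
      have hm2 : mx (pw v (1 + (-k₁).toNat)) ≤ S * K := hmxpw v _ hjvS hA2
      have hβ1 : 6 * S * K + 1 ≤ ((G + k₂.toNat : ℕ) : ℤ) := by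
        rw [Nat.cast_add]
        have := Int.natCast_nonneg k₂.toNat
        linarith [hG6]
      have hβ2 : 6 * S * K + 1 ≤ ((G + (-k₂).toNat : ℕ) : ℤ) := by
        rw [Nat.cast_add]
        have := Int.natCast_nonneg (-k₂).toNat
        linarith [hG6]
      have hβdw1 : ((G + k₂.toNat : ℕ) : ℤ) - 1 ≤ (((G + k₂.toNat : ℕ) : ℤ) - 1) * dl w := by
        have e1 := mul_le_mul_of_nonneg_left (show (1:ℤ) ≤ dl w by linarith)
          (show (0:ℤ) ≤ ((G + k₂.toNat : ℕ) : ℤ) - 1 by linarith)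
        rw [mul_one] at e1
        exact e1
      have hβdw2 : ((G + (-k₂).toNat : ℕ) : ℤ) - 1 ≤ (((G + (-k₂).toNat : ℕ) : ℤ) - 1) * dl w := by
        have e1 := mul_le_mul_of_nonneg_left (show (1:ℤ) ≤ dl w by linarith)
          (show (0:ℤ) ≤ ((G + (-k₂).toNat : ℕ) : ℤ) - 1 by linarith)
        rw [mul_one] at e1
        exact e1
      have e3 : dl u + ((1 + k₁.toNat : ℕ) : ℤ) * dl v +
          (mx w + (((G + k₂.toNat : ℕ) : ℤ) - 1) * dl w) =
          dl u + ((1 + (-k₁).toNat : ℕ) : ℤ) * dl v +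
          (mx w + (((G + (-k₂).toNat : ℕ) : ℤ) - 1) * dl w) := by
        linear_combination dl v * hA + dl w * hB + dk - k₃ * hdu0
      have e4 : dl u + ((1 + k₁.toNat : ℕ) : ℤ) * dl v + ((G + k₂.toNat : ℕ) : ℤ) * dl w +
          mx u =
          dl u + ((1 + (-k₁).toNat : ℕ) : ℤ) * dl v + ((G + (-k₂).toNat : ℕ) : ℤ) * dl w +
          mx u := by
        linear_combination dl v * hA + dl w * hB + dk - k₃ * hdu0
      apply le_antisymm
      · refine max4_le ?_ ?_ ?_ ?_
        · exact le_max4_1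
        · refine le_trans ?_ le_max4_3
          linarith [e3, hm1, hp1, hβdw1, hβ1]
        · exact le_trans (le_of_eq e3) le_max4_3
        · exact le_trans (le_of_eq e4) le_max4_4
      · refine max4_le ?_ ?_ ?_ ?_
        · exact le_max4_1
        · refine le_trans ?_ le_max4_3
          linarith [e3, hm2, hp2, hβdw2, hβ2]
        · exact le_trans (le_of_eq e3.symm) le_max4_3
        · exact le_trans (le_of_eq e4.symm) le_max4_4
    · -- dv ≤ 0 ∧ dw ≤ 0 : bases a0 = G, b0 = 1, g1 = 1, g2 = 1
      refine ⟨G, 1, 1, 1, ?_⟩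
      rw [mx_four, mx_four]
      simp only [pw_one]
      simp only [dl_pw]
      rw [mx_pw_nonpos hdv (show 1 ≤ G + k₁.toNat by omega),
          mx_pw_nonpos hdv (show 1 ≤ G + (-k₁).toNat by omega),
          mx_pw_nonpos hdw (show 1 ≤ 1 + k₂.toNat by omega),
          mx_pw_nonpos hdw (show 1 ≤ 1 + (-k₂).toNat by omega),
          mx_pw_nonpos hdu0.le (show 1 ≤ 1 + k₃.toNat by omega),
          mx_pw_nonpos hdu0.le (show 1 ≤ 1 + (-k₃).toNat by omega)]
      have hA : ((G + k₁.toNat : ℕ) : ℤ) = ((G + (-k₁).toNat : ℕ) : ℤ) + k₁ := by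
        rw [Nat.cast_add, Nat.cast_add]; linarith [toNat_diff k₁]
      have hB : ((1 + k₂.toNat : ℕ) : ℤ) = ((1 + (-k₂).toNat : ℕ) : ℤ) + k₂ := by
        rw [Nat.cast_add, Nat.cast_add]; linarith [toNat_diff k₂]
      have e4 : dl u + ((G + k₁.toNat : ℕ) : ℤ) * dl v + ((1 + k₂.toNat : ℕ) : ℤ) * dl w +
          mx u =
          dl u + ((G + (-k₁).toNat : ℕ) : ℤ) * dl v + ((1 + (-k₂).toNat : ℕ) : ℤ) * dl w +
          mx u := by
        linear_combination dl v * hA + dl w * hB + dk - k₃ * hdu0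
      rcases eq_or_lt_of_le hdv with hdveq | hdvlt
      · have e3 : dl u + ((G + k₁.toNat : ℕ) : ℤ) * dl v + mx w =
            dl u + ((G + (-k₁).toNat : ℕ) : ℤ) * dl v + mx w := by
          rw [hdveq]; ring
        apply le_antisymm
        · refine max4_le ?_ ?_ ?_ ?_
          · exact le_max4_1
          · exact le_max4_2
          · exact le_trans (le_of_eq e3) le_max4_3
          · exact le_trans (le_of_eq e4) le_max4_4
        · refine max4_le ?_ ?_ ?_ ?_
          · exact le_max4_1
          · exact le_max4_2
          · exact le_trans (le_of_eq e3.symm) le_max4_3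
          · exact le_trans (le_of_eq e4.symm) le_max4_4
      · have hα1 : 6 * S * K + 1 ≤ ((G + k₁.toNat : ℕ) : ℤ) := by
          rw [Nat.cast_add]
          have := Int.natCast_nonneg k₁.toNat
          linarith [hG6]
        have hα2 : 6 * S * K + 1 ≤ ((G + (-k₁).toNat : ℕ) : ℤ) := by
          rw [Nat.cast_add]
          have := Int.natCast_nonneg (-k₁).toNat
          linarith [hG6]
        have hαdv1 : ((G + k₁.toNat : ℕ) : ℤ) * dl v ≤ -((G + k₁.toNat : ℕ) : ℤ) := by
          have e1 := mul_le_mul_of_nonneg_left (show dl v ≤ (-1:ℤ) by linarith)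
            (show (0:ℤ) ≤ ((G + k₁.toNat : ℕ) : ℤ) by positivity)
          rw [mul_neg_one] at e1
          exact e1
        have hαdv2 : ((G + (-k₁).toNat : ℕ) : ℤ) * dl v ≤ -((G + (-k₁).toNat : ℕ) : ℤ) := by
          have e1 := mul_le_mul_of_nonneg_left (show dl v ≤ (-1:ℤ) by linarith)
            (show (0:ℤ) ≤ ((G + (-k₁).toNat : ℕ) : ℤ) by positivity)
          rw [mul_neg_one] at e1
          exact e1
        apply le_antisymm
        · refine max4_le ?_ ?_ ?_ ?_
          · exact le_max4_1
          · exact le_max4_2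
          · refine le_trans ?_ le_max4_1
            linarith [hαdv1, hα1, hdu0, hmwS, hSSK, h4]
          · exact le_trans (le_of_eq e4) le_max4_4
        · refine max4_le ?_ ?_ ?_ ?_
          · exact le_max4_1
          · exact le_max4_2
          · refine le_trans ?_ le_max4_1
            linarith [hαdv2, hα2, hdu0, hmwS, hSSK, h4]
          · exact le_trans (le_of_eq e4.symm) le_max4_4

section Trace
variable {Γ : Type} [DecidableEq Γ]

noncomputable def cnt (d : Γ) : FreeMonoid Γ →* Multiplicative ℕ :=
  FreeMonoid.lift (fun g => Multiplicative.ofAdd (if g = d then 1 else 0))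

lemma traceCon_count {I : Γ → Γ → Prop} (d : Γ) {x y : FreeMonoid Γ}
    (h : traceCon I x y) : cnt d x = cnt d y := by
  have hle : traceCon I ≤ Con.ker (cnt d) := by
    apply Con.conGen_le.2
    rintro x y ⟨a, b, -, rfl, rfl⟩
    show cnt d _ = cnt d _
    rw [map_mul, map_mul, mul_comm]
  exact hle h

lemma cnt_word (d a b c : Γ) (n1 n2 n3 n4 : ℕ) :
    Multiplicative.toAdd (cnt d ((FreeMonoid.of a)^n1 * ((FreeMonoid.of b)^n2 *
      ((FreeMonoid.of c)^n3 * (FreeMonoid.of a)^n4)))) =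
    n1 * (if a = d then 1 else 0) + (n2 * (if b = d then 1 else 0) +
      (n3 * (if c = d then 1 else 0) + n4 * (if a = d then 1 else 0))) := by
  simp [map_mul, map_pow, FreeMonoid.lift_eval_of, cnt, smul_eq_mul]

end Trace

lemma ofList_app (l l' : List (A ⊕ A)) :
    FreeMonoid.ofList (l ++ l') = FreeMonoid.ofList l * FreeMonoid.ofList l' := rfl

lemma mkq_pw (l : List (A ⊕ A)) (n : ℕ) :
    (queueCon A).mk' (FreeMonoid.ofList (pw l n)) = ((queueCon A).mk' (FreeMonoid.ofList l))^n := by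
  induction n with
  | zero =>
    show (queueCon A).mk' 1 = _
    rw [map_one, pow_zero]
  | succ n ih =>
    rw [pw_succ, ofList_app, map_mul, ih, pow_succ']

lemma G {Γ : Type} {I : Γ → Γ → Prop}
    (hirr : ∀ x, ¬ I x x)
    (η : TraceMonoid I →* QueueMonoid A) (hη : Function.Injective η)
    (a b c : Γ) (hab : I a b) (hac : I a c) (hbc : b ≠ c)
    (u v w : List (A ⊕ A))
    (hu : (queueCon A).mk' (FreeMonoid.ofList u) = η ((traceCon I).mk' (FreeMonoid.of a)))
    (hv : (queueCon A).mk' (FreeMonoid.ofList v) = η ((traceCon I).mk' (FreeMonoid.of b)))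
    (hw : (queueCon A).mk' (FreeMonoid.ofList w) = η ((traceCon I).mk' (FreeMonoid.of c)))
    (hp : ppr u ≠ []) (hn : npr u ≠ [])
    (hcase : dl u < 0 ∨ 0 < dl u ∨ (dl u = 0 ∧ (0 < dl w ∨ (dl v ≤ 0 ∧ dl w ≤ 0)))) :
    False := by
  classical
  have hne_ab : a ≠ b := fun h => hirr a (by rw [← h] at hab; exact hab)
  have hne_ac : a ≠ c := fun h => hirr a (by rw [← h] at hac; exact hac)
  -- commutation in the queue monoid
  have comm : ∀ (g : Γ) (z : List (A ⊕ A)), I a g →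
      (queueCon A).mk' (FreeMonoid.ofList z) = η ((traceCon I).mk' (FreeMonoid.of g)) →
      QEquiv A (u ++ z) (z ++ u) := by
    intro g z hg hz
    have t1 : (traceCon I) (FreeMonoid.of a * FreeMonoid.of g)
        (FreeMonoid.of g * FreeMonoid.of a) :=
      ConGen.Rel.of _ _ ⟨a, g, hg, rfl, rfl⟩
    have t5 : (queueCon A).mk' (FreeMonoid.ofList u * FreeMonoid.ofList z) =
        (queueCon A).mk' (FreeMonoid.ofList z * FreeMonoid.ofList u) := by
      rw [map_mul, map_mul, hu, hz, ← map_mul η, ← map_mul η, ← map_mul, ← map_mul]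
      exact congrArg η ((Con.eq _).2 t1)
    exact (Con.eq _).1 t5
  have cb := comm b v hab hv
  have cc := comm c w hac hw
  obtain ⟨hxp, hyn⟩ := comm_proj cb
  obtain ⟨hx'p, hy'n⟩ := comm_proj cc
  -- kernel vector
  obtain ⟨k₁, k₂, k₃, hknz, hk1, hk2⟩ := kernel_exists
    ((ppr v).length : ℤ) ((ppr w).length : ℤ) ((ppr u).length : ℤ)
    ((npr v).length : ℤ) ((npr w).length : ℤ) ((npr u).length : ℤ)
    (by exact_mod_cast List.length_pos_iff.2 hp)
  have dk : dl v * k₁ + dl w * k₂ + dl u * k₃ = 0 := by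
    simp only [dl]
    linear_combination hk2 - hk1
  obtain ⟨a0, b0, g1, g2, hmx⟩ := H u v w k₁ k₂ k₃ hcase dk
  -- projections of the two words agree
  have hppr : ppr (pw u g1 ++ (pw v (a0 + k₁.toNat) ++ (pw w (b0 + k₂.toNat)
        ++ pw u (g2 + k₃.toNat)))) =
      ppr (pw u g1 ++ (pw v (a0 + (-k₁).toNat) ++ (pw w (b0 + (-k₂).toNat)
        ++ pw u (g2 + (-k₃).toNat)))) := by
    simp only [ppr_append, ppr_pw]
    apply eq_of_comm_of_length hp
    · exact comm_append (comm_pw rfl g1) (comm_append (comm_pw hxp _)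
        (comm_append (comm_pw hx'p _) (comm_pw rfl _)))
    · exact comm_append (comm_pw rfl g1) (comm_append (comm_pw hxp _)
        (comm_append (comm_pw hx'p _) (comm_pw rfl _)))
    · simp only [List.length_append, length_pw]
      have d1 := Int.toNat_sub_toNat_neg k₁
      have d2 := Int.toNat_sub_toNat_neg k₂
      have d3 := Int.toNat_sub_toNat_neg k₃
      zify
      push_cast
      linear_combination hk1 + ((ppr v).length : ℤ) * d1 + ((ppr w).length : ℤ) * d2
        + ((ppr u).length : ℤ) * d3
  have hnpr : npr (pw u g1 ++ (pw v (a0 + k₁.toNat) ++ (pw w (b0 + k₂.toNat)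
        ++ pw u (g2 + k₃.toNat)))) =
      npr (pw u g1 ++ (pw v (a0 + (-k₁).toNat) ++ (pw w (b0 + (-k₂).toNat)
        ++ pw u (g2 + (-k₃).toNat)))) := by
    simp only [npr_append, npr_pw]
    apply eq_of_comm_of_length hn
    · exact comm_append (comm_pw rfl g1) (comm_append (comm_pw hyn _)
        (comm_append (comm_pw hy'n _) (comm_pw rfl _)))
    · exact comm_append (comm_pw rfl g1) (comm_append (comm_pw hyn _)
        (comm_append (comm_pw hy'n _) (comm_pw rfl _)))
    · simp only [List.length_append, length_pw]
      have d1 := Int.toNat_sub_toNat_neg k₁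
      have d2 := Int.toNat_sub_toNat_neg k₂
      have d3 := Int.toNat_sub_toNat_neg k₃
      zify
      push_cast
      linear_combination hk2 + ((npr v).length : ℤ) * d1 + ((npr w).length : ℤ) * d2
        + ((npr u).length : ℤ) * d3
  have hQ : QEquiv A
      (pw u g1 ++ (pw v (a0 + k₁.toNat) ++ (pw w (b0 + k₂.toNat) ++ pw u (g2 + k₃.toNat))))
      (pw u g1 ++ (pw v (a0 + (-k₁).toNat) ++ (pw w (b0 + (-k₂).toNat)
        ++ pw u (g2 + (-k₃).toNat)))) :=
    qequiv_of_inv hppr hnpr hmx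
  have hmk : (queueCon A).mk' (FreeMonoid.ofList (pw u g1 ++ (pw v (a0 + k₁.toNat)
        ++ (pw w (b0 + k₂.toNat) ++ pw u (g2 + k₃.toNat))))) =
      (queueCon A).mk' (FreeMonoid.ofList (pw u g1 ++ (pw v (a0 + (-k₁).toNat)
        ++ (pw w (b0 + (-k₂).toNat) ++ pw u (g2 + (-k₃).toNat))))) :=
    (Con.eq _).2 hQ
  have img : ∀ n1 n2 n3 n4 : ℕ,
      (queueCon A).mk' (FreeMonoid.ofList (pw u n1 ++ (pw v n2 ++ (pw w n3 ++ pw u n4)))) =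
      η ((traceCon I).mk' ((FreeMonoid.of a)^n1 * ((FreeMonoid.of b)^n2 *
        ((FreeMonoid.of c)^n3 * (FreeMonoid.of a)^n4)))) := by
    intro n1 n2 n3 n4
    rw [ofList_app, ofList_app, ofList_app, map_mul, map_mul, map_mul,
        mkq_pw, mkq_pw, mkq_pw, mkq_pw, hu, hv, hw]
    simp only [map_mul, map_pow]
  rw [img, img] at hmk
  have tr := hη hmk
  have treq := (Con.eq _).1 tr
  have eb := congrArg Multiplicative.toAdd (traceCon_count b treq)
  have ec := congrArg Multiplicative.toAdd (traceCon_count c treq)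
  have ea := congrArg Multiplicative.toAdd (traceCon_count a treq)
  rw [cnt_word, cnt_word] at eb ec ea
  simp [hne_ab, hne_ac, hbc, Ne.symm hne_ab, Ne.symm hne_ac, Ne.symm hbc] at eb ec ea
  have hz1 : k₁ = 0 := by omega
  have hz2 : k₂ = 0 := by omega
  have hz3 : k₃ = 0 := by omega
  exact hknz ⟨hz1, hz2, hz3⟩


end QP


/-- If `η` embeds the trace monoid into the queue monoid and both projections of
`η(a)` are nonempty, then `a` has degree at most 1 in `(Γ, I)`. -/
theorem stmt15 (Γ A : Type) [DecidableEq A] (I : Γ → Γ → Prop)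
    (hirr : ∀ a, ¬ I a a) (hsym : ∀ a b, I a b → I b a)
    (η : TraceMonoid I →* QueueMonoid A) (hη : Function.Injective η)
    (a : Γ) (ha : GammaPM I η a) :
    ∀ b c : Γ, I a b → I a c → b = c := by
  intro b c hab hac
  by_contra hbc
  obtain ⟨u, hu, hp, hn⟩ := ha
  obtain ⟨v0, hv0⟩ := Con.mk'_surjective (c := queueCon A) (η ((traceCon I).mk' (FreeMonoid.of b)))
  obtain ⟨w0, hw0⟩ := Con.mk'_surjective (c := queueCon A) (η ((traceCon I).mk' (FreeMonoid.of c)))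
  have hv : (queueCon A).mk' (FreeMonoid.ofList v0.toList)
      = η ((traceCon I).mk' (FreeMonoid.of b)) := hv0
  have hw : (queueCon A).mk' (FreeMonoid.ofList w0.toList)
      = η ((traceCon I).mk' (FreeMonoid.of c)) := hw0
  set v := v0.toList
  set w := w0.toList
  rcases lt_trichotomy (QP.dl u) 0 with hdu | hdu | hdu
  · exact QP.G hirr η hη a b c hab hac hbc u v w hu hv hw hp hn (Or.inl hdu)
  · rcases le_or_gt (QP.dl w) 0 with hw0' | hw0'
    · rcases le_or_gt (QP.dl v) 0 with hv0' | hv0'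
      · exact QP.G hirr η hη a b c hab hac hbc u v w hu hv hw hp hn
          (Or.inr (Or.inr ⟨hdu, Or.inr ⟨hv0', hw0'⟩⟩))
      · exact QP.G hirr η hη a c b hac hab (Ne.symm hbc) u w v hu hw hv hp hn
          (Or.inr (Or.inr ⟨hdu, Or.inl hv0'⟩))
    · exact QP.G hirr η hη a b c hab hac hbc u v w hu hv hw hp hn
        (Or.inr (Or.inr ⟨hdu, Or.inl hw0'⟩))
  · exact QP.G hirr η hη a b c hab hac hbc u v w hu hv hw hp hn (Or.inr (Or.inl hdu))
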